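/- arXiv:2008.05100 — 4 statements merged into one kernel-verified Lean document; each statement's English description precedes it below -/
import Mathlib

section
/- For initial state |0⟩_{S_A} (i.e. α_c = δ_{c,0}) and Alice's x=2 measurement given by the Fourier basis β_{c,a} = (1/√d) e^{i2πca/d}, the Baumann-Brukner prescription yields P(c|x=2) = 1/d for every c, while P(c|x=1) = δ_{c,0}. In particular for d ≥ 2, P(c|x=1) ≠ P(c|x=2), so the marginal distribution of Charlie's outcome depends on Alice's measurement choice. -/
open scoped ComplexConjugate Real
open Finset

lemma normSq_beta (d : ℕ) (hd : 2 ≤ d) (c a : Fin d) :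
    Complex.normSq ((1 / Real.sqrt d) *
      Complex.exp (2 * π * Complex.I * (c : ℕ) * (a : ℕ) / d)) = 1 / d := by
  have hd0 : (0:ℝ) ≤ d := by positivity
  have hre : (2 * π * Complex.I * (c : ℕ) * (a : ℕ) / (d:ℂ)) =
      (((2 * π * (c:ℕ) * (a:ℕ) / d : ℝ)) : ℂ) * Complex.I := by
    push_cast; ring
  rw [map_mul, hre, Complex.normSq_eq_norm_sq, Complex.normSq_eq_norm_sq,
    Complex.norm_exp_ofReal_mul_I]
  rw [show ((1 : ℂ) / Real.sqrt d) = ((1 / Real.sqrt d : ℝ) : ℂ) by push_cast; ring,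
    Complex.norm_real, Real.norm_of_nonneg (by positivity), one_pow, mul_one, div_pow,
    one_pow, Real.sq_sqrt hd0]

/-- with initial state `|0⟩` (`α_c = δ_{c,0}`) and Alice's `x = 2`
measurement given by the Fourier basis `β_{c,a} = d^{-1/2} e^{i2πca/d}`, the
Baumann–Brukner prescription yields `P(c|x=2) = 1/d` for every `c`, while
`P(c|x=1) = δ_{c,0}`; in particular for `d ≥ 2` the two marginal distributions
of Charlie's outcome differ. -/
theorem BB_marginal_depends_on_setting (d : ℕ) (hd : 2 ≤ d)
    (α : Fin d → ℂ) (hα : ∀ c, α c = if (c : ℕ) = 0 then 1 else 0)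
    (β : Fin d → Fin d → ℂ)
    (hβ : ∀ c a, β c a = (1 / Real.sqrt d) *
      Complex.exp (2 * π * Complex.I * (c : ℕ) * (a : ℕ) / d))
    (P1 P2 : Fin d → ℝ)
    (hP1 : ∀ c, P1 c = Complex.normSq (α c))
    (hP2 : ∀ c, P2 c =
      ∑ a, Complex.normSq (∑ c', α c' * conj (β c' a)) * Complex.normSq (β c a)) :
    (∀ c, P2 c = 1 / d) ∧
    (∀ c, P1 c = if (c : ℕ) = 0 then 1 else 0) ∧
    P1 ≠ P2 := by
  haveI : NeZero d := ⟨by omega⟩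
  have hdR : (2:ℝ) ≤ d := by exact_mod_cast hd
  have hdne : (d:ℝ) ≠ 0 := by positivity
  have hin : ∀ a : Fin d, (∑ c', α c' * conj (β c' a)) = conj (β 0 a) := by
    intro a
    rw [Finset.sum_eq_single 0]
    · rw [hα]; simp
    · intro b _ hb
      rw [hα, if_neg (show ¬ ((b:ℕ) = 0) from
        fun hb0 => hb (Fin.ext (by simpa using hb0))), zero_mul]
    · simp
  have hbsq : ∀ c a : Fin d, Complex.normSq (β c a) = 1 / d := by
    intro c a; rw [hβ]; exact normSq_beta d hd c a
  have hP2' : ∀ c, P2 c = 1 / d := by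
    intro c
    rw [hP2]
    have : ∀ a : Fin d, Complex.normSq (∑ c', α c' * conj (β c' a)) *
        Complex.normSq (β c a) = 1 / d * (1 / d) := by
      intro a
      rw [hin a, Complex.normSq_conj, hbsq, hbsq]
    rw [Finset.sum_congr rfl fun a _ => this a, Finset.sum_const, card_univ,
      Fintype.card_fin, nsmul_eq_mul]
    field_simp
  have hP1' : ∀ c, P1 c = if (c : ℕ) = 0 then 1 else 0 := by
    intro c
    rw [hP1, hα]
    split <;> simp
  refine ⟨hP2', hP1', fun h => ?_⟩
  have h0 := congrFun h 0
  rw [hP1' 0, hP2' 0] at h0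
  simp only [Fin.val_zero, if_pos rfl, if_true] at h0
  have : (d:ℝ) = 1 := by field_simp at h0; linarith
  linarith
end

section
/- In Deutsch's thought experiment, the composition U₁† ∘ U₂ ∘ U₁ applied to |φ₀⟩_S|R⟩_{F_S}|R⟩_{F_M} yields the product state |φ₀⟩_S|R⟩_{F_S}|O⟩_{F_M}; consequently a subsequent projective measurement of S containing the projector onto |φ₀⟩ yields that outcome with probability 1. -/
open scoped ComplexConjugate InnerProductSpace
open Finset

/-- Threefold tensor product of vectors: `S ⊗ F_S ⊗ F_M`. -/
noncomputable def tpT {n m k : ℕ} (s : EuclideanSpace ℂ (Fin n))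
    (f : EuclideanSpace ℂ (Fin m)) (g : EuclideanSpace ℂ (Fin k)) :
    EuclideanSpace ℂ (Fin n × Fin m × Fin k) :=
  WithLp.toLp 2 (fun p : Fin n × Fin m × Fin k => s p.1 * f p.2.1 * g p.2.2)

lemma tpT_smul_add {n m k : ℕ} (a b : ℂ) (x y : EuclideanSpace ℂ (Fin n))
    (f : EuclideanSpace ℂ (Fin m)) (g : EuclideanSpace ℂ (Fin k)) :
    tpT (a • x + b • y) f g = a • tpT x f g + b • tpT y f g := by
  ext p
  simp [tpT, PiLp.add_apply, PiLp.smul_apply, smul_eq_mul]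
  ring

lemma tpT_inner {n m k : ℕ} (x x' : EuclideanSpace ℂ (Fin n))
    (f f' : EuclideanSpace ℂ (Fin m)) (g g' : EuclideanSpace ℂ (Fin k)) :
    ⟪tpT x f g, tpT x' f' g'⟫_ℂ = ⟪x, x'⟫_ℂ * ⟪f, f'⟫_ℂ * ⟪g, g'⟫_ℂ := by
  simp only [PiLp.inner_apply, RCLike.inner_apply, tpT, PiLp.toLp_apply, Fintype.sum_prod_type, map_mul]
  rw [mul_assoc, Finset.sum_mul_sum, Finset.sum_mul_sum]
  simp_rw [Finset.mul_sum]
  refine Finset.sum_congr rfl fun i _ => Finset.sum_congr rfl fun j _ =>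
    Finset.sum_congr rfl fun l _ => ?_
  ring

lemma sum_normSq {m : ℕ} (v : EuclideanSpace ℂ (Fin m)) (hv : ‖v‖ = 1) :
    ∑ j : Fin m, Complex.normSq (v j) = 1 := by
  have h := EuclideanSpace.norm_eq v
  rw [hv] at h
  have h2 : (1:ℝ) = ∑ j, ‖v j‖^2 := by
    have := congrArg (· ^ 2) h
    simpa [Real.sq_sqrt (Finset.sum_nonneg fun j _ => sq_nonneg _)] using this
  simp only [Complex.normSq_eq_norm_sq]
  exact h2.symm
/-- in Deutsch's thought experiment the composition `U₁† ∘ U₂ ∘ U₁`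
applied to `|φ₀⟩|R⟩|R⟩` yields the product state `|φ₀⟩|R⟩|O⟩`; consequently a
subsequent projective measurement of `S` containing the projector onto `|φ₀⟩`
yields that outcome with probability 1. Here `W₁ = U₁ ⊗ 1_{F_M}` and
`W₂ = 1_S ⊗ U₂` are the extensions of the unitaries `U₁` (on `S ⊗ F_S`) and
`U₂` (on `F_S ⊗ F_M`) to the total space. -/
theorem deutsch_reversal {m k : ℕ}
    (e0 e1 : EuclideanSpace ℂ (Fin 2))
    (he0 : ‖e0‖ = 1) (he1 : ‖e1‖ = 1) (hS : ⟪e0, e1⟫_ℂ = 0)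
    (RS O0 O1 : EuclideanSpace ℂ (Fin m))
    (hRS : ‖RS‖ = 1) (hO0 : ‖O0‖ = 1) (hO1 : ‖O1‖ = 1) (hO : ⟪O0, O1⟫_ℂ = 0)
    (RM OM : EuclideanSpace ℂ (Fin k)) (hRM : ‖RM‖ = 1) (hOM : ‖OM‖ = 1)
    (α β : ℂ) (hnorm : Complex.normSq α + Complex.normSq β = 1)
    (φ₀ : EuclideanSpace ℂ (Fin 2)) (hφ₀ : φ₀ = α • e0 + β • e1)
    (W₁ W₂ : EuclideanSpace ℂ (Fin 2 × Fin m × Fin k) ≃ₗᵢ[ℂ]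
      EuclideanSpace ℂ (Fin 2 × Fin m × Fin k))
    -- W₁ acts as U₁ ⊗ 1, with U₁|i⟩|R⟩ = |i⟩|O_i⟩:
    (hW₁0 : ∀ g, W₁ (tpT e0 RS g) = tpT e0 O0 g)
    (hW₁1 : ∀ g, W₁ (tpT e1 RS g) = tpT e1 O1 g)
    -- W₂ acts as 1 ⊗ U₂, with U₂|R⟩|R⟩ = |R⟩|R⟩ and U₂|O_i⟩|R⟩ = |O_i⟩|O⟩:
    (hW₂R : ∀ s, W₂ (tpT s RS RM) = tpT s RS RM)
    (hW₂0 : ∀ s, W₂ (tpT s O0 RM) = tpT s O0 OM)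
    (hW₂1 : ∀ s, W₂ (tpT s O1 RM) = tpT s O1 OM) :
    W₁.symm (W₂ (W₁ (tpT φ₀ RS RM))) = tpT φ₀ RS OM ∧
    ∑ j : Fin m, ∑ l : Fin k,
      Complex.normSq ⟪tpT φ₀ (EuclideanSpace.single j (1:ℂ))
        (EuclideanSpace.single l (1:ℂ)), W₁.symm (W₂ (W₁ (tpT φ₀ RS RM)))⟫_ℂ = 1 := by
  have h00 : ⟪e0, e0⟫_ℂ = 1 := by
    rw [inner_self_eq_norm_sq_to_K, he0]; norm_num
  have h11 : ⟪e1, e1⟫_ℂ = 1 := by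
    rw [inner_self_eq_norm_sq_to_K, he1]; norm_num
  have h10 : ⟪e1, e0⟫_ℂ = 0 := by
    rw [← inner_conj_symm, hS, map_zero]
  have hφφ : ⟪φ₀, φ₀⟫_ℂ = 1 := by
    simp only [hφ₀, inner_add_left, inner_add_right, inner_smul_left, inner_smul_right,
      h00, h11, hS, h10, mul_one, mul_zero, add_zero, zero_add]
    rw [Complex.mul_conj, Complex.mul_conj]
    exact_mod_cast hnorm
  have step : W₁.symm (W₂ (W₁ (tpT φ₀ RS RM))) = tpT φ₀ RS OM := by
    rw [hφ₀, tpT_smul_add, map_add, map_smul, map_smul, hW₁0, hW₁1,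
      map_add, map_smul, map_smul, hW₂0, hW₂1, ← hW₁0 OM, ← hW₁1 OM,
      map_add, map_smul, map_smul, LinearIsometryEquiv.symm_apply_apply,
      LinearIsometryEquiv.symm_apply_apply, ← tpT_smul_add]
  refine ⟨step, ?_⟩
  rw [step]
  have hsingle : ∀ (j : Fin m) (l : Fin k),
      ⟪tpT φ₀ (EuclideanSpace.single j (1:ℂ)) (EuclideanSpace.single l (1:ℂ)),
        tpT φ₀ RS OM⟫_ℂ = RS j * OM l := by
    intro j l
    rw [tpT_inner, hφφ, EuclideanSpace.inner_single_left, EuclideanSpace.inner_single_left]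
    simp
  simp only [hsingle, Complex.normSq_mul]
  rw [← Finset.sum_mul_sum, sum_normSq RS hRS, sum_normSq OM hOM, one_mul]
end

section
/- In Deutsch's thought experiment with an objective collapse after the friend's measurement, the post-reversal state is |0⟩_S|R⟩_{F_S}|O⟩_{F_M} with probability |α|² or |1⟩_S|R⟩_{F_S}|O⟩_{F_M} with probability |β|², so the probability of Wigner obtaining the outcome [φ₀]_S in measurement M₂ is |α|⁴ + |β|⁴, which is strictly less than 1 whenever αβ ≠ 0. Hence collapse and no-collapse give different predictions for M₂. -/
open scoped ComplexConjugate InnerProductSpace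
open Finset

/-- in Deutsch's experiment with objective collapse after the
friend's measurement, the post-reversal state in branch `i` is `|i⟩|R⟩|O⟩`
(occurring with probability `|α|²` resp. `|β|²`), so the probability of
Wigner obtaining outcome `[φ₀]` in the measurement `M₂` is
`|α|²·|⟨φ₀|0⟩|² + |β|²·|⟨φ₀|1⟩|² = |α|⁴ + |β|⁴ < 1` whenever `αβ ≠ 0`;
hence collapse and no-collapse give different predictions for `M₂`. -/
theorem deutsch_collapse_prediction {m k : ℕ}
    (e0 e1 : EuclideanSpace ℂ (Fin 2))
    (he0 : ‖e0‖ = 1) (he1 : ‖e1‖ = 1) (hS : ⟪e0, e1⟫_ℂ = 0)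
    (RS O0 O1 : EuclideanSpace ℂ (Fin m))
    (hRS : ‖RS‖ = 1) (hO0 : ‖O0‖ = 1) (hO1 : ‖O1‖ = 1) (hO : ⟪O0, O1⟫_ℂ = 0)
    (RM OM : EuclideanSpace ℂ (Fin k)) (hRM : ‖RM‖ = 1) (hOM : ‖OM‖ = 1)
    (α β : ℂ) (hnorm : Complex.normSq α + Complex.normSq β = 1)
    (hαβ : α * β ≠ 0)
    (φ₀ : EuclideanSpace ℂ (Fin 2)) (hφ₀ : φ₀ = α • e0 + β • e1)
    (W₁ W₂ : EuclideanSpace ℂ (Fin 2 × Fin m × Fin k) ≃ₗᵢ[ℂ]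
      EuclideanSpace ℂ (Fin 2 × Fin m × Fin k))
    (hW₁0 : ∀ g, W₁ (tpT e0 RS g) = tpT e0 O0 g)
    (hW₁1 : ∀ g, W₁ (tpT e1 RS g) = tpT e1 O1 g)
    (hW₂R : ∀ s, W₂ (tpT s RS RM) = tpT s RS RM)
    (hW₂0 : ∀ s, W₂ (tpT s O0 RM) = tpT s O0 OM)
    (hW₂1 : ∀ s, W₂ (tpT s O1 RM) = tpT s O1 OM) :
    -- post-reversal states of the two collapse branches:
    W₁.symm (W₂ (tpT e0 O0 RM)) = tpT e0 RS OM ∧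
    W₁.symm (W₂ (tpT e1 O1 RM)) = tpT e1 RS OM ∧
    -- probability of outcome [φ₀] in M₂ under collapse:
    Complex.normSq α * Complex.normSq ⟪φ₀, e0⟫_ℂ
      + Complex.normSq β * Complex.normSq ⟪φ₀, e1⟫_ℂ
      = Complex.normSq α ^ 2 + Complex.normSq β ^ 2 ∧
    Complex.normSq α ^ 2 + Complex.normSq β ^ 2 < 1 := by
  refine ⟨?_, ?_, ?_, ?_⟩
  · rw [hW₂0, ← hW₁0 OM, LinearIsometryEquiv.symm_apply_apply]
  · rw [hW₂1, ← hW₁1 OM, LinearIsometryEquiv.symm_apply_apply]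
  · have h00 : ⟪e0, e0⟫_ℂ = 1 := by
      rw [inner_self_eq_norm_sq_to_K, he0]; norm_num
    have h11 : ⟪e1, e1⟫_ℂ = 1 := by
      rw [inner_self_eq_norm_sq_to_K, he1]; norm_num
    have h10 : ⟪e1, e0⟫_ℂ = 0 := by
      rw [← inner_conj_symm, hS, map_zero]
    have k0 : ⟪φ₀, e0⟫_ℂ = conj α := by
      rw [hφ₀, inner_add_left, inner_smul_left, inner_smul_left, h00, h10]
      ring
    have k1 : ⟪φ₀, e1⟫_ℂ = conj β := by
      rw [hφ₀, inner_add_left, inner_smul_left, inner_smul_left, hS, h11]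
      ring
    rw [k0, k1, Complex.normSq_conj, Complex.normSq_conj]; ring
  · have ha : 0 < Complex.normSq α := by
      simpa [Complex.normSq_pos] using fun h => hαβ (by simp [h])
    have hb : 0 < Complex.normSq β := by
      simpa [Complex.normSq_pos] using fun h => hαβ (by simp [h])
    nlinarith [mul_pos ha hb]
end

section
/- If a bipartite correlation P(a,b|x,y) violates some Local Friendliness (partially deterministic) inequality, then it also violates some Bell inequality (lies outside the Bell-local polytope); the converse fails: there exist correlations inside the partially deterministic polytope but outside the Bell-local polytope (for suitable finite scenarios, e.g., when x=1 is the only setting with deterministic response, and x≥2 responses are unconstrained no-signalling). -/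
open Finset

/-- The Local Friendliness (partially deterministic) set: convex mixtures over a
hidden variable `λ` of no-signalling boxes `P(a,b|x,y,λ)` whose Alice-marginal
at the setting `x₁` (= 1) is deterministic; the responses at the other settings
are unconstrained no-signalling. -/
def LFset {X Y A B : Type*} [Fintype A] [Fintype B] (x₁ : X) :
    Set (X → Y → A → B → ℝ) :=
  {p | ∃ (M : ℕ) (q : Fin M → ℝ) (Pl : Fin M → X → Y → A → B → ℝ),
    (∀ l, 0 ≤ q l) ∧ (∑ l, q l = 1) ∧
    (∀ l x y a b, 0 ≤ Pl l x y a b) ∧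
    (∀ l x y, ∑ a, ∑ b, Pl l x y a b = 1) ∧
    -- no-signalling in both directions:
    (∀ l x y y' a, ∑ b, Pl l x y a b = ∑ b, Pl l x y' a b) ∧
    (∀ l x x' y b, ∑ a, Pl l x y a b = ∑ a, Pl l x' y a b) ∧
    -- Alice's response at x = x₁ is deterministic given λ:
    (∀ l y a, (∑ b, Pl l x₁ y a b = 0) ∨ (∑ b, Pl l x₁ y a b = 1)) ∧
    (∀ x y a b, p x y a b = ∑ l, q l * Pl l x y a b)}

/-- The Bell-local polytope: convex mixtures of products of (deterministic)
local response functions. -/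
def BellLocal (X Y A B : Type*) [Fintype A] [Fintype B] :
    Set (X → Y → A → B → ℝ) :=
  {p | ∃ (M : ℕ) (q : Fin M → ℝ) (PA : Fin M → X → A → ℝ) (PB : Fin M → Y → B → ℝ),
    (∀ l, 0 ≤ q l) ∧ (∑ l, q l = 1) ∧
    (∀ l x, ∑ a, PA l x a = 1) ∧ (∀ l y, ∑ b, PB l y b = 1) ∧
    (∀ l x a, PA l x a = 0 ∨ PA l x a = 1) ∧
    (∀ l y b, PB l y b = 0 ∨ PB l y b = 1) ∧
    (∀ x y a b, p x y a b = ∑ l, q l * PA l x a * PB l y b)}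

/-- The example correlation: at `x = 0`, Alice deterministically outputs `0` and
Bob is uniform; at `x ∈ {1,2}`, `y ∈ {0,1}`, a PR box on the inputs `(x-1, y)`
(extended no-signallingly to `y = 2`). -/
noncomputable def pEx : Fin 3 → Fin 3 → Fin 2 → Fin 2 → ℝ := fun x y a b =>
  if x = 0 then (if a = 0 then 1/2 else 0)
  else if a = b + (if x = 2 ∧ y = 1 then 1 else 0) then 1/2 else 0

lemma pEx_nonneg : ∀ x y a b, 0 ≤ pEx x y a b := by
  intro x y a b
  unfold pEx
  split_ifs <;> norm_num

lemma pEx_sumB : ∀ x y a, ∑ b, pEx x y a b =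
    if x = 0 then (if a = 0 then 1 else 0) else 1/2 := by
  intro x y a
  fin_cases x <;> fin_cases y <;> fin_cases a <;>
    simp [pEx, Fin.sum_univ_two]

lemma pEx_sumA : ∀ x y b, ∑ a, pEx x y a b = 1/2 := by
  intro x y b
  fin_cases x <;> fin_cases y <;> fin_cases b <;>
    simp [pEx, Fin.sum_univ_two]

/-- any correlation violating a Local Friendliness (partially
deterministic) inequality also violates a Bell inequality (`L ⊆ D`, stated
contrapositively); the converse fails: for a suitable finite scenario with at
least 2 settings and 2 outcomes per side, there is a correlation inside the
partially deterministic polytope but outside the Bell-local polytope. -/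
theorem LF_violation_implies_Bell_violation_but_not_conversely :
    (∀ {X Y A B : Type} [Fintype X] [Fintype Y] [Fintype A] [Fintype B] (x₁ : X)
      (p : X → Y → A → B → ℝ),
      p ∉ LFset (X := X) (Y := Y) (A := A) (B := B) x₁ → p ∉ BellLocal X Y A B) ∧
    (∃ (N K : ℕ) (hN : 2 ≤ N) (_hK : 2 ≤ K)
      (p : Fin N → Fin N → Fin K → Fin K → ℝ),
      p ∈ LFset (X := Fin N) (Y := Fin N) (A := Fin K) (B := Fin K)
          (⟨0, by omega⟩ : Fin N) ∧
      p ∉ BellLocal (Fin N) (Fin N) (Fin K) (Fin K)) := by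
  constructor
  · -- L ⊆ D, contrapositively
    intro X Y A B _ _ _ _ x₁ p hLF hBell
    apply hLF
    obtain ⟨M, q, PA, PB, hq0, hq1, hPA1, hPB1, hPA01, hPB01, hp⟩ := hBell
    have hPAnn : ∀ l x a, 0 ≤ PA l x a := by
      intro l x a; rcases hPA01 l x a with h | h <;> rw [h] <;> norm_num
    have hPBnn : ∀ l y b, 0 ≤ PB l y b := by
      intro l y b; rcases hPB01 l y b with h | h <;> rw [h] <;> norm_num
    refine ⟨M, q, fun l x y a b => PA l x a * PB l y b, hq0, hq1, ?_, ?_, ?_, ?_, ?_, ?_⟩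
    · intro l x y a b; exact mul_nonneg (hPAnn l x a) (hPBnn l y b)
    · intro l x y
      rw [← Finset.sum_mul_sum, hPA1, hPB1, one_mul]
    · intro l x y y' a
      rw [← Finset.mul_sum, ← Finset.mul_sum, hPB1, hPB1]
    · intro l x x' y b
      rw [← Finset.sum_mul, ← Finset.sum_mul, hPA1, hPA1]
    · intro l y a
      rw [← Finset.mul_sum, hPB1, mul_one]
      exact hPA01 l x₁ a
    · intro x y a b
      rw [hp]
      exact Finset.sum_congr rfl fun l _ => by ring
  · -- the converse fails: pEx is in the LF set but not Bell local
    refine ⟨3, 2, by norm_num, by norm_num, pEx, ?_, ?_⟩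
    · -- pEx ∈ LFset 0
      refine ⟨1, fun _ => 1, fun _ => pEx, fun _ => by norm_num, by simp,
        fun _ => pEx_nonneg, ?_, ?_, ?_, ?_, ?_⟩
      · intro _ x y
        simp only [pEx_sumB]
        fin_cases x <;> simp [Fin.sum_univ_two]
      · intro _ x y y' a
        rw [pEx_sumB, pEx_sumB]
      · intro _ x x' y b
        rw [pEx_sumA, pEx_sumA]
      · intro _ y a
        rw [pEx_sumB]
        rw [if_pos (show (⟨0, by omega⟩ : Fin 3) = 0 from rfl)]
        split_ifs <;> simp
      · intro x y a b; rw [Fin.sum_univ_one, one_mul]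
    · -- pEx ∉ BellLocal : CHSH
      rintro ⟨M, q, PA, PB, hq0, hq1, hPA1, hPB1, hPA01, hPB01, hp⟩
      -- correlators of the decomposition
      have hE : ∀ x y, pEx x y 0 0 - pEx x y 0 1 - pEx x y 1 0 + pEx x y 1 1 =
          ∑ l, q l * ((PA l x 0 - PA l x 1) * (PB l y 0 - PB l y 1)) := by
        intro x y
        rw [hp, hp, hp, hp, ← Finset.sum_sub_distrib, ← Finset.sum_sub_distrib,
          ← Finset.sum_add_distrib]
        exact Finset.sum_congr rfl fun l _ => by ring
      have hAval : ∀ l x, PA l x 0 - PA l x 1 = 1 ∨ PA l x 0 - PA l x 1 = -1 := by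
        intro l x
        have hs := hPA1 l x
        rw [Fin.sum_univ_two] at hs
        rcases hPA01 l x 0 with h0 | h0 <;> rcases hPA01 l x 1 with h1 | h1 <;>
          (revert hs; norm_num [h0, h1])
      have hBval : ∀ l y, PB l y 0 - PB l y 1 = 1 ∨ PB l y 0 - PB l y 1 = -1 := by
        intro l y
        have hs := hPB1 l y
        rw [Fin.sum_univ_two] at hs
        rcases hPB01 l y 0 with h0 | h0 <;> rcases hPB01 l y 1 with h1 | h1 <;>
          (revert hs; norm_num [h0, h1])
      -- the CHSH value of pEx is 4
      have e10 : pEx 1 0 0 0 - pEx 1 0 0 1 - pEx 1 0 1 0 + pEx 1 0 1 1 = 1 := by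
        norm_num [pEx, show ((1:Fin 2)+1 : Fin 2) = 0 from rfl,
          show ((0:Fin 2)+1 : Fin 2) = 1 from rfl, Fin.ext_iff]
      have e11 : pEx 1 1 0 0 - pEx 1 1 0 1 - pEx 1 1 1 0 + pEx 1 1 1 1 = 1 := by
        norm_num [pEx, show ((1:Fin 2)+1 : Fin 2) = 0 from rfl,
          show ((0:Fin 2)+1 : Fin 2) = 1 from rfl, Fin.ext_iff]
      have e20 : pEx 2 0 0 0 - pEx 2 0 0 1 - pEx 2 0 1 0 + pEx 2 0 1 1 = 1 := by
        norm_num [pEx, show ((1:Fin 2)+1 : Fin 2) = 0 from rfl,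
          show ((0:Fin 2)+1 : Fin 2) = 1 from rfl, Fin.ext_iff]
      have e21 : pEx 2 1 0 0 - pEx 2 1 0 1 - pEx 2 1 1 0 + pEx 2 1 1 1 = -1 := by
        norm_num [pEx, show ((1:Fin 2)+1 : Fin 2) = 0 from rfl,
          show ((0:Fin 2)+1 : Fin 2) = 1 from rfl, Fin.ext_iff]
      have key : (4 : ℝ) = ∑ l, q l *
          ((PA l 1 0 - PA l 1 1) * (PB l 0 0 - PB l 0 1) +
           (PA l 1 0 - PA l 1 1) * (PB l 1 0 - PB l 1 1) +
           (PA l 2 0 - PA l 2 1) * (PB l 0 0 - PB l 0 1) -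
           (PA l 2 0 - PA l 2 1) * (PB l 1 0 - PB l 1 1)) := by
        have := hE 1 0
        have h2 := hE 1 1
        have h3 := hE 2 0
        have h4 := hE 2 1
        rw [e10] at this; rw [e11] at h2; rw [e20] at h3; rw [e21] at h4
        have hsum : (1 : ℝ) + 1 + 1 - (-1) =
            (∑ l, q l * ((PA l 1 0 - PA l 1 1) * (PB l 0 0 - PB l 0 1))) +
            (∑ l, q l * ((PA l 1 0 - PA l 1 1) * (PB l 1 0 - PB l 1 1))) +
            (∑ l, q l * ((PA l 2 0 - PA l 2 1) * (PB l 0 0 - PB l 0 1))) -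
            (∑ l, q l * ((PA l 2 0 - PA l 2 1) * (PB l 1 0 - PB l 1 1))) := by
          rw [← this, ← h2, ← h3, ← h4]
        rw [← Finset.sum_add_distrib, ← Finset.sum_add_distrib,
          ← Finset.sum_sub_distrib] at hsum
        calc (4 : ℝ) = 1 + 1 + 1 - (-1) := by norm_num
          _ = _ := by
            rw [hsum]
            exact Finset.sum_congr rfl fun l _ => by ring
      have bound : ∑ l, q l *
          ((PA l 1 0 - PA l 1 1) * (PB l 0 0 - PB l 0 1) +
           (PA l 1 0 - PA l 1 1) * (PB l 1 0 - PB l 1 1) +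
           (PA l 2 0 - PA l 2 1) * (PB l 0 0 - PB l 0 1) -
           (PA l 2 0 - PA l 2 1) * (PB l 1 0 - PB l 1 1)) ≤ ∑ l, q l * 2 := by
        apply Finset.sum_le_sum
        intro l _
        apply mul_le_mul_of_nonneg_left _ (hq0 l)
        rcases hAval l 1 with h1 | h1 <;> rcases hAval l 2 with h2 | h2 <;>
          rcases hBval l 0 with h3 | h3 <;> rcases hBval l 1 with h4 | h4 <;>
          rw [h1, h2, h3, h4] <;> norm_num
      rw [← Finset.sum_mul, hq1, one_mul] at bound
      rw [← key] at bound
      norm_num at bound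
end
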